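/- Let p, v, t be real numbers with p > 1, v > 1 and t > 0, set x̂ = t · v^(1/(1−p)) and ŷ = (t^p − x̂^p)^(1/p) (real powers). Then for every x ∈ [0, t], (t^p − x^p)^(1/p) · (v·t − x̂) ≤ ŷ · (v·t − x); that is, the first-quadrant arc of the p-circle of radius t lies below the line through (x̂, ŷ) and (v·t, 0). -/

import Mathlib

open Real

/-- The first-quadrant arc of the `p`-circle of radius `t` lies below the line
through the tangent point `(x̂, ŷ)` and `(v·t, 0)`. -/
theorem stmt_7 (p v t : ℝ) (hp : 1 < p) (hv : 1 < v) (ht : 0 < t) :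
    let xhat : ℝ := t * v ^ (1 / (1 - p))
    let yhat : ℝ := (t ^ p - xhat ^ p) ^ (1 / p)
    ∀ x ∈ Set.Icc (0:ℝ) t,
      (t ^ p - x ^ p) ^ (1 / p) * (v * t - xhat) ≤ yhat * (v * t - x) := by
  intro xhat yhat x hx
  obtain ⟨hx0, hxt⟩ := hx
  have hp0 : (0:ℝ) < p := by linarith
  have hp1 : (0:ℝ) < p - 1 := by linarith
  have hv0 : (0:ℝ) < v := by linarith
  set s : ℝ := v ^ (1 / (1 - p)) with hs
  have hs0 : 0 < s := rpow_pos_of_pos hv0 _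
  have hs1 : s < 1 := by
    apply rpow_lt_one_of_one_lt_of_neg hv
    apply div_neg_of_pos_of_neg one_pos
    linarith
  have hsp1 : s ^ (p - 1) = 1 / v := by
    rw [hs, ← Real.rpow_mul hv0.le]
    have hne : (1:ℝ) - p ≠ 0 := by linarith
    have h1 : 1 / (1 - p) * (p - 1) = -1 := by
      field_simp
      ring
    rw [h1, Real.rpow_neg_one, one_div]
  have hxhat0 : 0 < xhat := mul_pos ht hs0
  have hxhatlt : xhat < t := by
    have := mul_lt_mul_of_pos_left hs1 ht
    simpa using this
  -- basic rpow identities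
  have hpow : ∀ A : ℝ, 0 ≤ A → (A ^ (1 / p)) ^ p = A := by
    intro A hA
    rw [← Real.rpow_mul hA, one_div, inv_mul_cancel₀ hp0.ne', Real.rpow_one]
  have hxhatp : xhat ^ p < t ^ p := rpow_lt_rpow hxhat0.le hxhatlt hp0
  have hyA : 0 < t ^ p - xhat ^ p := sub_pos.2 hxhatp
  have hy0 : 0 < yhat := rpow_pos_of_pos hyA _
  have hyp : yhat ^ p = t ^ p - xhat ^ p := hpow _ hyA.le
  have hfA : 0 ≤ t ^ p - x ^ p := sub_nonneg.2 (rpow_le_rpow hx0 hxt hp0.le)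
  set f : ℝ := (t ^ p - x ^ p) ^ (1 / p) with hf
  have hf0 : 0 ≤ f := rpow_nonneg hfA _
  have hfp : f ^ p = t ^ p - x ^ p := hpow _ hfA
  -- split exponent identities
  have hsplit : ∀ A : ℝ, 0 < A → A ^ p = A ^ (p - 1) * A := by
    intro A hA
    rw [Real.rpow_sub_one hA.ne', div_mul_cancel₀ _ hA.ne']
  -- tangent identity : yhat ^ p = xhat ^ (p-1) * (v * t - xhat)
  have hxhatp1 : xhat ^ (p - 1) = t ^ (p - 1) * (1 / v) := by
    rw [show xhat = t * s from rfl, Real.mul_rpow ht.le hs0.le, hsp1]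
  have htp : t ^ p = t ^ (p - 1) * t := hsplit t ht
  have hsp : s ^ p = (1 / v) * s := by
    rw [hsplit s hs0, hsp1]
  have hxhatpp : xhat ^ p = t ^ p * s ^ p := by
    rw [show xhat = t * s from rfl, Real.mul_rpow ht.le hs0.le]
  have htan : yhat ^ p = xhat ^ (p - 1) * (v * t - xhat) := by
    rw [hyp, hxhatp1, hxhatpp, hsp, show xhat = t * s from rfl]
    rw [htp]
    field_simp
  -- Young's inequality applications
  have hpq : p.HolderConjugate (p / (p - 1)) := by
    exact Real.HolderConjugate.conjExponent hp
  have hq : (p - 1) * (p / (p - 1)) = p := by field_simp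
  have hY1 : x * xhat ^ (p - 1) ≤ x ^ p / p + xhat ^ p / (p / (p - 1)) := by
    have := Real.young_inequality_of_nonneg hx0 (rpow_nonneg hxhat0.le (p - 1)) hpq
    rwa [← Real.rpow_mul hxhat0.le, hq] at this
  have hY2 : f * yhat ^ (p - 1) ≤ f ^ p / p + yhat ^ p / (p / (p - 1)) := by
    have := Real.young_inequality_of_nonneg hf0 (rpow_nonneg hy0.le (p - 1)) hpq
    rwa [← Real.rpow_mul hy0.le, hq] at this
  -- sum up: x * xhat^(p-1) + f * yhat^(p-1) ≤ xhat^p + yhat^p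
  have hsum : x * xhat ^ (p - 1) + f * yhat ^ (p - 1) ≤ xhat ^ p + yhat ^ p := by
    have h1 : x ^ p / p + xhat ^ p / (p / (p - 1)) + (f ^ p / p + yhat ^ p / (p / (p - 1)))
        = (x ^ p + f ^ p) / p + (xhat ^ p + yhat ^ p) / (p / (p - 1)) := by ring
    have h2 : x ^ p + f ^ p = t ^ p := by rw [hfp]; ring
    have h3 : xhat ^ p + yhat ^ p = t ^ p := by rw [hyp]; ring
    have h4 : (x ^ p + f ^ p) / p + (xhat ^ p + yhat ^ p) / (p / (p - 1))
        = xhat ^ p + yhat ^ p := by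
      rw [h2, h3]
      field_simp
      ring
    linarith
  -- conclude
  have hxx : xhat ^ p = xhat ^ (p - 1) * xhat := hsplit xhat hxhat0
  have hyy : yhat ^ p = yhat ^ (p - 1) * yhat := hsplit yhat hy0
  have hkey : f * yhat ^ (p - 1) ≤ xhat ^ (p - 1) * (v * t - x) := by
    have hexp : xhat ^ (p - 1) * xhat + xhat ^ (p - 1) * (v * t - xhat)
        - x * xhat ^ (p - 1) = xhat ^ (p - 1) * (v * t - x) := by ring
    linarith [hsum, hxx.symm, htan.symm]
  have hvt : 0 < v * t - xhat := by nlinarith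
  have hyp1pos : 0 < yhat ^ (p - 1) := rpow_pos_of_pos hy0 _
  rw [← mul_le_mul_iff_right₀ hyp1pos]
  calc yhat ^ (p - 1) * (f * (v * t - xhat))
      = (f * yhat ^ (p - 1)) * (v * t - xhat) := by ring
    _ ≤ (xhat ^ (p - 1) * (v * t - x)) * (v * t - xhat) :=
        mul_le_mul_of_nonneg_right hkey hvt.le
    _ = (xhat ^ (p - 1) * (v * t - xhat)) * (v * t - x) := by ring
    _ = yhat ^ p * (v * t - x) := by rw [htan]
    _ = yhat ^ (p - 1) * (yhat * (v * t - x)) := by rw [hyy]; ring
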